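/- Every circular arc path has finitely many real-part-constancy segments: for any z₀, z ∈ ℂ and r, st, tt ∈ ℝ, the path t ↦ z₀ + r·exp(i·((1−t)·st + t·tt)) satisfies the finite_ReZ_segments property with respect to z. -/

import Mathlib

open Complex Filter Topology Polynomial Set

/-- A predicate `P` admits a finite segmentation of `[a,b]`. -/
inductive FinitePsegments (P : ℝ → Prop) : ℝ → ℝ → Prop where
  | emptyI (a b : ℝ) (hab : b ≤ a) : FinitePsegments P a b
  | insertI_1 (a b s : ℝ) (hs : s ∈ Set.Ico a b) (h0 : s = a ∨ P s)
      (hP : ∀ t ∈ Set.Ioo s b, P t) (hrec : FinitePsegments P a s) :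
      FinitePsegments P a b
  | insertI_2 (a b s : ℝ) (hs : s ∈ Set.Ico a b) (h0 : s = a ∨ P s)
      (hP : ∀ t ∈ Set.Ioo s b, ¬ P t) (hrec : FinitePsegments P a s) :
      FinitePsegments P a b

/-- `[0,1]` decomposes into finitely many consecutive subintervals on each of whose
interiors `Re (γ t - z) = 0` holds identically or fails identically. -/
def finiteReZSegments (γ : ℝ → ℂ) (z : ℂ) : Prop :=
  FinitePsegments (fun t => (γ t - z).re = 0) 0 1

private lemma aux_card (P : ℝ → Prop) (a : ℝ) :
    ∀ n : ℕ, ∀ b : ℝ, ∀ h : {t | t ∈ Set.Ico a b ∧ P t}.Finite,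
      h.toFinset.card ≤ n → FinitePsegments P a b := by
  intro n
  induction n with
  | zero =>
    intro b h hcard
    rcases le_or_gt b a with hba | hab
    · exact .emptyI a b hba
    · refine .insertI_2 a b a ⟨le_rfl, hab⟩ (Or.inl rfl) ?_ (.emptyI a a le_rfl)
      intro t ht hPt
      have hmem : t ∈ h.toFinset := by
        simp only [Set.Finite.mem_toFinset, Set.mem_setOf_eq]
        exact ⟨⟨ht.1.le, ht.2⟩, hPt⟩
      have : h.toFinset = ∅ := Finset.card_eq_zero.mp (Nat.le_zero.mp hcard)
      rw [this] at hmem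
      simp at hmem
  | succ n ih =>
    intro b h hcard
    rcases le_or_gt b a with hba | hab
    · exact .emptyI a b hba
    by_cases hS : h.toFinset.Nonempty
    · set s := h.toFinset.max' hS with hs_def
      have hsmem : s ∈ h.toFinset := Finset.max'_mem _ _
      have hsmem' : s ∈ Set.Ico a b ∧ P s := by
        simpa using hsmem
      obtain ⟨hsIco, hPs⟩ := hsmem'
      have hsub : {t | t ∈ Set.Ico a s ∧ P t} ⊆ {t | t ∈ Set.Ico a b ∧ P t} := by
        intro t ⟨htIco, hPt⟩
        exact ⟨⟨htIco.1, htIco.2.trans hsIco.2⟩, hPt⟩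
      have h' : {t | t ∈ Set.Ico a s ∧ P t}.Finite := h.subset hsub
      refine .insertI_2 a b s hsIco (Or.inr hPs) ?_ ?_
      · intro t ht hPt
        have hmem : t ∈ h.toFinset := by
          simp only [Set.Finite.mem_toFinset, Set.mem_setOf_eq]
        
          exact ⟨⟨hsIco.1.trans ht.1.le, ht.2⟩, hPt⟩
        have := Finset.le_max' _ t hmem
        exact absurd this (not_le.mpr ht.1)
      · apply ih s h'
        have herase : h'.toFinset ⊆ h.toFinset.erase s := by
          intro t ht
          simp only [Set.Finite.mem_toFinset, Set.mem_setOf_eq] at ht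
          refine Finset.mem_erase.mpr ⟨ne_of_lt ht.1.2, ?_⟩
          simp only [Set.Finite.mem_toFinset, Set.mem_setOf_eq]
          exact ⟨⟨ht.1.1, ht.1.2.trans hsIco.2⟩, ht.2⟩
        calc h'.toFinset.card ≤ (h.toFinset.erase s).card := Finset.card_le_card herase
          _ = h.toFinset.card - 1 := Finset.card_erase_of_mem hsmem
          _ ≤ n := by omega
    · refine .insertI_2 a b a ⟨le_rfl, hab⟩ (Or.inl rfl) ?_ (.emptyI a a le_rfl)
      intro t ht hPt
      exact hS ⟨t, by
        simp only [Set.Finite.mem_toFinset, Set.mem_setOf_eq]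
        exact ⟨⟨ht.1.le, ht.2⟩, hPt⟩⟩

private lemma finitePsegments_of_finite (P : ℝ → Prop) (a b : ℝ)
    (h : {t | t ∈ Set.Ico a b ∧ P t}.Finite) : FinitePsegments P a b :=
  aux_card P a h.toFinset.card b h le_rfl

theorem finite_ReZ_segments_part_circlepath (z₀ z : ℂ) (r st tt : ℝ) :
    finiteReZSegments
      (fun t : ℝ => z₀ + (r : ℂ) * Complex.exp (Complex.I * (((1 - t) * st + t * tt : ℝ) : ℂ)))
      z := by
  set f : ℝ → ℝ := fun t =>
    ((z₀ + (r : ℂ) * Complex.exp (Complex.I * (((1 - t) * st + t * tt : ℝ) : ℂ))) - z).re with hf_def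
  have hfa : ∀ t : ℝ, AnalyticAt ℝ f t := by
    intro t
    have h0 : AnalyticAt ℝ (fun t : ℝ => (1 - t) * st + t * tt) t :=
      ((analyticAt_const.sub analyticAt_id).mul analyticAt_const).add
        (analyticAt_id.mul analyticAt_const)
    have h1 : AnalyticAt ℝ (fun t : ℝ => (((1 - t) * st + t * tt : ℝ) : ℂ)) t :=
      (Complex.ofRealCLM.analyticAt _).comp h0
    have h2 : AnalyticAt ℝ (fun t : ℝ => Complex.I * (((1 - t) * st + t * tt : ℝ) : ℂ)) t :=
      analyticAt_const.mul h1
    have h3 : AnalyticAt ℝ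
        (fun t : ℝ => Complex.exp (Complex.I * (((1 - t) * st + t * tt : ℝ) : ℂ))) t :=
      (analyticAt_cexp.restrictScalars).comp h2
    have h4 : AnalyticAt ℝ (fun t : ℝ =>
        (z₀ + (r : ℂ) * Complex.exp (Complex.I * (((1 - t) * st + t * tt : ℝ) : ℂ))) - z) t :=
      (analyticAt_const.add (analyticAt_const.mul h3)).sub analyticAt_const
    exact (Complex.reCLM.analyticAt _).comp h4
  unfold finiteReZSegments
  by_cases hE : Set.EqOn f 0 Set.univ
  · refine .insertI_1 0 1 0 ⟨le_rfl, one_pos⟩ (Or.inl rfl) ?_ (.emptyI 0 0 le_rfl)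
    intro t _
    exact hE (Set.mem_univ t)
  · apply finitePsegments_of_finite
    by_contra hinf
    have hinf : Set.Infinite {t | t ∈ Set.Ico (0:ℝ) 1 ∧ f t = 0} := hinf
    obtain ⟨x, -, hx⟩ := hinf.exists_accPt_of_subset_isCompact isCompact_Icc
      (fun t ht => Set.Ico_subset_Icc_self ht.1)
    have hfreq : ∃ᶠ y in 𝓝[≠] x, f y = 0 := by
      have := accPt_iff_frequently.mp hx
      rw [frequently_nhdsWithin_iff]
      exact this.mono fun y hy => ⟨hy.2.2, hy.1⟩
    exact hE <| AnalyticOnNhd.eqOn_zero_of_preconnected_of_frequently_eq_zero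
      (fun t _ => hfa t) isPreconnected_univ (Set.mem_univ x) hfreq
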